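/- Let R be a commutative Noetherian ring, A a projective Noetherian R-algebra, Q a finitely generated A-module projective over R with DQ ⊗_A Q projective over R. For a finite family of finitely generated A-modules M_i (i in a finite index set I), each projective over R, the relative dominant dimension of the direct sum equals the infimum: Q-domdim_{(A,R)}(⊕_{i∈I} M_i) = inf { Q-domdim_{(A,R)} M_i : i ∈ I }. -/

import Mathlib

universe u
open Function TensorProduct

namespace RelDom

section


variable (R : Type u) [CommRing R] (A : Type u) [Ring A] [Algebra R A]

/-- `M` is a direct summand of a finite direct sum of copies of `T`, i.e. `M ∈ add T`. -/
def InAdd (T : Type u) [AddCommGroup T] [Module A T]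
    (M : Type u) [AddCommGroup M] [Module A M] : Prop :=
  ∃ (n : ℕ) (i : M →ₗ[A] (Fin n → T)) (p : (Fin n → T) →ₗ[A] M), ∀ m, p (i m) = m

/-- `f` is an `(A,R)`-monomorphism : an injective `A`-linear map admitting an
`R`-linear retraction (the `R`-action being the one through `algebraMap R A`). -/
def RSplitMono {M N : Type u} [AddCommGroup M] [Module A M]
    [AddCommGroup N] [Module A N] (f : M →ₗ[A] N) : Prop :=
  Injective f ∧ ∃ r : N →+ M,
    (∀ (s : R) (x : N), r (algebraMap R A s • x) = algebraMap R A s • r x) ∧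
    ∀ m, r (f m) = m

/-- `f` is an `(A,R)`-epimorphism : a surjective `A`-linear map admitting an
`R`-linear section. -/
def RSplitEpi {M N : Type u} [AddCommGroup M] [Module A M]
    [AddCommGroup N] [Module A N] (f : M →ₗ[A] N) : Prop :=
  Surjective f ∧ ∃ s : N →+ M,
    (∀ (c : R) (x : N), s (algebraMap R A c • x) = algebraMap R A c • s x) ∧
    ∀ x, f (s x) = x

/-- A submodule `p ≤ N` is an `R`-direct summand of `N`. -/
def RSummand {N : Type u} [AddCommGroup N] [Module A N] (p : Submodule A N) : Prop :=
  ∃ r : N →+ p, (∀ (c : R) (x : N), r (algebraMap R A c • x) = algebraMap R A c • r x) ∧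
    ∀ x : p, r x = x

/-- `Q`-relative dominant dimension of `M` is at least `n`:
there is an `(A,R)`-exact sequence `0 → M → T₁ → ⋯ → Tₙ` with all `Tᵢ ∈ add Q`
which stays exact under `Hom_A(-, Q)`. -/
def DomdimGE (Q : Type u) [AddCommGroup Q] [Module A Q] :
    ℕ → ModuleCat.{u} A → Prop
  | 0, _ => True
  | n + 1, M =>
      ∃ (T : ModuleCat.{u} A) (_ : InAdd A Q T) (f : M →ₗ[A] T),
        RSplitMono R A f ∧
        (∀ g : (M : Type u) →ₗ[A] Q, ∃ h : (T : Type u) →ₗ[A] Q, ∀ m, h (f m) = g m) ∧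
        DomdimGE Q n (ModuleCat.of A ((T : Type u) ⧸ LinearMap.range f))

/-- `Q`-relative codominant dimension of `M` is at least `n`. -/
def CodomdimGE (Q : Type u) [AddCommGroup Q] [Module A Q] :
    ℕ → ModuleCat.{u} A → Prop
  | 0, _ => True
  | n + 1, M =>
      ∃ (T : ModuleCat.{u} A) (_ : InAdd A Q T) (f : T →ₗ[A] M),
        RSplitEpi R A f ∧
        (∀ g : Q →ₗ[A] (M : Type u), ∃ h : Q →ₗ[A] (T : Type u), ∀ q, f (h q) = g q) ∧
        CodomdimGE Q n (ModuleCat.of A (LinearMap.ker f))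

/-- The relative dominant dimension of `M` with respect to `Q`, as a value in `ℕ∞`. -/
noncomputable def Domdim (Q : Type u) [AddCommGroup Q] [Module A Q]
    (M : ModuleCat.{u} A) : ℕ∞ :=
  ⨆ (n : ℕ) (_ : DomdimGE R A Q n M), (n : ℕ∞)

/-- The relative codominant dimension of `M` with respect to `Q`, as a value in `ℕ∞`. -/
noncomputable def Codomdim (Q : Type u) [AddCommGroup Q] [Module A Q]
    (M : ModuleCat.{u} A) : ℕ∞ :=
  ⨆ (n : ℕ) (_ : CodomdimGE R A Q n M), (n : ℕ∞)


end

section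


variable (R : Type u) [CommRing R] (A : Type u) [Ring A] [Algebra R A]

section Dual

variable (S : Type u) [Ring S]
variable (M : Type u) [AddCommGroup M] [Module R M] [Module S M] [SMulCommClass S R M]

/-- scalar action of `a : S` as an `R`-linear endomorphism. -/
def smulEnd (a : S) : M →ₗ[R] M where
  toFun m := a • m
  map_add' := smul_add a
  map_smul' r m := smul_comm a r m

/-- The standard duality `D = Hom_R(-, R)` turns a left `S`-module into a right
`S`-module, i.e. a module over `Sᵐᵒᵖ`. -/
instance dualModule : Module Sᵐᵒᵖ (M →ₗ[R] R) where
  smul a f := f ∘ₗ smulEnd R S M a.unop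
  one_smul f := LinearMap.ext fun m => by
    show f ((1 : Sᵐᵒᵖ).unop • m) = f m
    simp
  mul_smul a b f := LinearMap.ext fun m => by
    show f ((a * b).unop • m) = f (b.unop • a.unop • m)
    rw [MulOpposite.unop_mul, mul_smul]
  smul_zero a := LinearMap.ext fun m => rfl
  smul_add a f g := LinearMap.ext fun m => rfl
  add_smul a b f := LinearMap.ext fun m => by
    show f ((a + b).unop • m) = f (a.unop • m) + f (b.unop • m)
    rw [MulOpposite.unop_add, add_smul, map_add]
  zero_smul f := LinearMap.ext fun m => by
    show f ((0 : Sᵐᵒᵖ).unop • m) = 0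
    rw [MulOpposite.unop_zero, zero_smul, map_zero]

lemma dual_smul_apply (a : Sᵐᵒᵖ) (f : M →ₗ[R] R) (m : M) :
    (a • f) m = f (a.unop • m) := rfl

end Dual

section Coind

/-- The left `A`-module structure on `Hom_R(A, R)`, the dual of the *right*
regular module: `(a • f) x = f (x * a)`. -/
instance coindModule : Module A (A →ₗ[R] R) where
  smul a f := f ∘ₗ
    { toFun := fun x => x * a
      map_add' := fun x y => add_mul x y a
      map_smul' := fun r x => smul_mul_assoc r x a }
  one_smul f := LinearMap.ext fun x => by
    show f (x * 1) = f x
    rw [mul_one]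
  mul_smul a b f := LinearMap.ext fun x => by
    show f (x * (a * b)) = f ((x * a) * b)
    rw [mul_assoc]
  smul_zero a := LinearMap.ext fun x => rfl
  smul_add a f g := LinearMap.ext fun x => rfl
  add_smul a b f := LinearMap.ext fun x => by
    show f (x * (a + b)) = f (x * a) + f (x * b)
    rw [mul_add, map_add]
  zero_smul f := LinearMap.ext fun x => by
    show f (x * 0) = 0
    rw [mul_zero, map_zero]

lemma coind_smul_apply (a : A) (f : A →ₗ[R] R) (x : A) :
    (a • f) x = f (x * a) := rfl

end Coind

section TensorOver

variable (X : Type u) [AddCommGroup X] [Module R X] [Module Aᵐᵒᵖ X]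
variable (Y : Type u) [AddCommGroup Y] [Module R Y] [Module A Y]

/-- The balancing relations for the tensor product over the (possibly
noncommutative) `R`-algebra `A`. -/
def balanceRel : Set (X ⊗[R] Y) :=
  {z | ∃ (x : X) (a : A) (y : Y),
    z = (MulOpposite.op a • x) ⊗ₜ[R] y - x ⊗ₜ[R] (a • y)}

/-- The tensor product `X ⊗_A Y` of a right `A`-module `X` and a left `A`-module `Y`
over the `R`-algebra `A`, realized as a quotient of `X ⊗[R] Y`. -/
abbrev TensorOver : Type u :=
  (X ⊗[R] Y) ⧸ Submodule.span R (balanceRel R A X Y)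

end TensorOver


end

end RelDom

open RelDom Function TensorProduct

section Aux

variable (R : Type u) [CommRing R] (A : Type u) [Ring A] [Algebra R A]
variable (Q : Type u) [AddCommGroup Q] [Module A Q]

lemma domdimGE_succ_iff (n : ℕ) (M : ModuleCat.{u} A) :
    DomdimGE R A Q (n+1) M ↔
      ∃ (T : ModuleCat.{u} A) (_ : InAdd A Q T) (f : M →ₗ[A] T),
        RSplitMono R A f ∧
        (∀ g : (M : Type u) →ₗ[A] Q, ∃ h : (T : Type u) →ₗ[A] Q, ∀ m, h (f m) = g m) ∧
        DomdimGE R A Q n (ModuleCat.of A ((T : Type u) ⧸ LinearMap.range f)) := Iff.rfl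

variable {R A Q}

/-- Transport `DomdimGE` along an `A`-linear equivalence. -/
lemma domdimGE_congr {M M' : Type u} [AddCommGroup M] [Module A M]
    [AddCommGroup M'] [Module A M'] (e : M ≃ₗ[A] M') (n : ℕ)
    (h : DomdimGE R A Q n (ModuleCat.of A M)) : DomdimGE R A Q n (ModuleCat.of A M') := by
  cases n with
  | zero => trivial
  | succ n =>
    obtain ⟨T, hT, f, ⟨hinj, r, hr1, hr2⟩, hext, hcok⟩ := h
    have hr : LinearMap.range ((f : M →ₗ[A] T) ∘ₗ (e.symm : M' →ₗ[A] M)) = LinearMap.range f := by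
      rw [LinearMap.range_comp, LinearEquiv.range, Submodule.map_top]
    refine ⟨T, hT, (f : M →ₗ[A] T) ∘ₗ (e.symm : M' →ₗ[A] M),
      ⟨?_, (e : M →ₗ[A] M').toAddMonoidHom.comp r, ?_, ?_⟩, ?_, ?_⟩
    · exact hinj.comp e.symm.injective
    · intro c x
      show e (r (algebraMap R A c • x)) = algebraMap R A c • e (r x)
      rw [hr1, map_smul]
    · intro m
      show e (r (f (e.symm m))) = m
      rw [hr2, LinearEquiv.apply_symm_apply]
    · intro g
      obtain ⟨h, hh⟩ := hext (g ∘ₗ (e : M →ₗ[A] M'))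
      refine ⟨h, fun m' => ?_⟩
      have h2 := hh (e.symm m')
      have h3 : (g ∘ₗ (e : M →ₗ[A] M')) (e.symm m') = g m' :=
        congrArg g (e.apply_symm_apply m')
      exact h2.trans h3
    · rw [hr]; exact hcok

/-- `DomdimGE` is antitone in `n` (successor step). -/
lemma domdimGE_of_succ : ∀ (n : ℕ) (M : ModuleCat.{u} A),
    DomdimGE R A Q (n+1) M → DomdimGE R A Q n M
  | 0, _, _ => trivial
  | n+1, M, h => by
    obtain ⟨T, hT, f, h1, h2, h3⟩ := h
    exact ⟨T, hT, f, h1, h2, domdimGE_of_succ n _ h3⟩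

lemma domdimGE_mono {m n : ℕ} (hmn : m ≤ n) (M : ModuleCat.{u} A)
    (h : DomdimGE R A Q n M) : DomdimGE R A Q m M := by
  obtain ⟨k, rfl⟩ := Nat.exists_eq_add_of_le hmn
  clear hmn
  induction k with
  | zero => exact h
  | succ k ih => exact ih (domdimGE_of_succ _ _ h)

/-- Extension property lifts from maps into `Q` to maps into any module in `add Q`. -/
lemma ext_to_add {M X T : Type u} [AddCommGroup M] [Module A M] [AddCommGroup X] [Module A X]
    [AddCommGroup T] [Module A T] (hT : InAdd A Q T) (f : M →ₗ[A] X)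
    (hext : ∀ g : M →ₗ[A] Q, ∃ h : X →ₗ[A] Q, ∀ m, h (f m) = g m)
    (g : M →ₗ[A] T) : ∃ h : X →ₗ[A] T, ∀ m, h (f m) = g m := by
  obtain ⟨k, iT, pT, hpT⟩ := hT
  choose h hh using fun j : Fin k => hext ((LinearMap.proj j) ∘ₗ iT ∘ₗ g)
  refine ⟨pT ∘ₗ LinearMap.pi h, fun m => ?_⟩
  have key : LinearMap.pi h (f m) = iT (g m) := funext fun j => hh j m
  simp only [LinearMap.comp_apply, key, hpT]

end Aux
section Aux2

variable {R : Type u} [CommRing R] {A : Type u} [Ring A] [Algebra R A]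
variable {Q : Type u} [AddCommGroup Q] [Module A Q]

/-- Lift an additive map through a quotient by a submodule it kills. -/
def addQuotLift {M W : Type u} [AddCommGroup M] [Module A M] [AddCommGroup W]
    (p : Submodule A M) (f : M →+ W) (h : ∀ x ∈ p, f x = 0) : (M ⧸ p) →+ W :=
  QuotientAddGroup.lift p.toAddSubgroup f h

@[simp] lemma addQuotLift_mk {M W : Type u} [AddCommGroup M] [Module A M] [AddCommGroup W]
    (p : Submodule A M) (f : M →+ W) (h : ∀ x ∈ p, f x = 0) (x : M) :
    addQuotLift p f h (Submodule.Quotient.mk x) = f x := rfl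

/-- `add Q` is closed under binary products. -/
lemma inAdd_prod {T₁ T₂ : Type u} [AddCommGroup T₁] [Module A T₁] [AddCommGroup T₂] [Module A T₂]
    (h₁ : InAdd A Q T₁) (h₂ : InAdd A Q T₂) : InAdd A Q (T₁ × T₂) := by
  obtain ⟨k₁, i₁, p₁, hp₁⟩ := h₁
  obtain ⟨k₂, i₂, p₂, hp₂⟩ := h₂
  let e : (Fin (k₁ + k₂) → Q) ≃ₗ[A] (Fin k₁ → Q) × (Fin k₂ → Q) :=
    (LinearEquiv.funCongrLeft A Q finSumFinEquiv).trans
      (LinearEquiv.sumArrowLequivProdArrow _ _ A Q)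
  refine ⟨k₁ + k₂, e.symm.toLinearMap ∘ₗ (i₁.prodMap i₂), (p₁.prodMap p₂) ∘ₗ e.toLinearMap,
    fun t => ?_⟩
  show (p₁.prodMap p₂) (e (e.symm ((i₁.prodMap i₂) t))) = t
  rw [LinearEquiv.apply_symm_apply]
  exact Prod.ext (hp₁ t.1) (hp₂ t.2)

/-- `add Q` is closed under finite products. -/
lemma inAdd_pi {ι : Type u} [Fintype ι] {T : ι → Type u} [∀ i, AddCommGroup (T i)]
    [∀ i, Module A (T i)] (h : ∀ i, InAdd A Q (T i)) : InAdd A Q (∀ i, T i) := by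
  classical
  choose k iT pT hpT using h
  let e : (Fin (Fintype.card ((i : ι) × Fin (k i))) → Q) ≃ₗ[A] ∀ i, Fin (k i) → Q :=
    (LinearEquiv.funCongrLeft A Q (Fintype.equivFin ((i : ι) × Fin (k i)))).trans
      (LinearEquiv.piCurry A fun _ _ => Q)
  let iAll : (∀ i, T i) →ₗ[A] (∀ i, Fin (k i) → Q) :=
    LinearMap.pi fun i => (iT i) ∘ₗ LinearMap.proj i
  let pAll : (∀ i, Fin (k i) → Q) →ₗ[A] ∀ i, T i :=
    LinearMap.pi fun i => (pT i) ∘ₗ LinearMap.proj i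
  refine ⟨_, e.symm.toLinearMap ∘ₗ iAll, pAll ∘ₗ e.toLinearMap, fun t => ?_⟩
  show pAll (e (e.symm (iAll t))) = t
  rw [LinearEquiv.apply_symm_apply]
  exact funext fun i => hpT i (t i)

/-- The quotient of a product by a product of submodules, over a noncommutative ring. -/
noncomputable def quotPiEquiv {ι : Type u} {T : ι → Type u} [∀ i, AddCommGroup (T i)]
    [∀ i, Module A (T i)] (p : ∀ i, Submodule A (T i)) :
    ((∀ i, T i) ⧸ Submodule.pi Set.univ p) ≃ₗ[A] ∀ i, (T i ⧸ p i) := by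
  refine LinearEquiv.ofBijective
    (Submodule.liftQ _ (LinearMap.pi fun i => (p i).mkQ ∘ₗ LinearMap.proj i) ?_) ⟨?_, ?_⟩
  · intro x hx
    rw [LinearMap.mem_ker]
    ext i
    exact (Submodule.Quotient.mk_eq_zero _).mpr (hx i trivial)
  · intro a b hab
    obtain ⟨x, rfl⟩ := Submodule.Quotient.mk_surjective _ a
    obtain ⟨y, rfl⟩ := Submodule.Quotient.mk_surjective _ b
    rw [Submodule.liftQ_apply, Submodule.liftQ_apply] at hab
    rw [Submodule.Quotient.eq]
    intro i _
    have := congrFun hab i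
    simp only [LinearMap.pi_apply, LinearMap.comp_apply, LinearMap.proj_apply,
      Submodule.mkQ_apply] at this
    exact (Submodule.Quotient.eq _).mp this
  · intro c
    have : ∀ i, ∃ x, Submodule.Quotient.mk x = c i :=
      fun i => Submodule.Quotient.mk_surjective _ (c i)
    choose x hx using this
    refine ⟨Submodule.Quotient.mk x, ?_⟩
    rw [Submodule.liftQ_apply]
    exact funext fun i => hx i

@[simp] lemma quotPiEquiv_mk {ι : Type u} {T : ι → Type u} [∀ i, AddCommGroup (T i)]
    [∀ i, Module A (T i)] (p : ∀ i, Submodule A (T i)) (x : ∀ i, T i) (i : ι) :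
    quotPiEquiv p (Submodule.Quotient.mk x) i = Submodule.Quotient.mk (x i) := by
  simp only [quotPiEquiv, LinearEquiv.ofBijective_apply, Submodule.liftQ_apply]
  rfl

/-- The range of a product map is the product of the ranges. -/
lemma range_pi_map {ι : Type u} {M T : ι → Type u} [∀ i, AddCommGroup (M i)]
    [∀ i, Module A (M i)] [∀ i, AddCommGroup (T i)] [∀ i, Module A (T i)]
    (f : ∀ i, M i →ₗ[A] T i) :
    LinearMap.range (LinearMap.pi fun i => (f i) ∘ₗ LinearMap.proj i) =
      Submodule.pi Set.univ fun i => LinearMap.range (f i) := by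
  ext t
  simp only [LinearMap.mem_range, Submodule.mem_pi, Set.mem_univ, forall_true_left]
  constructor
  · rintro ⟨m, rfl⟩ i
    exact ⟨m i, rfl⟩
  · intro h
    choose m hm using h
    exact ⟨m, funext hm⟩

end Aux2
section Glue

variable {R : Type u} [CommRing R] {A : Type u} [Ring A] [Algebra R A]
variable {Q : Type u} [AddCommGroup Q] [Module A Q]

/-- Factor a linear map through a surjection whose kernel it kills. -/
lemma factor_surj {Z C W : Type u} [AddCommGroup Z] [Module A Z] [AddCommGroup C] [Module A C]
    [AddCommGroup W] [Module A W] (π : Z →ₗ[A] C) (surj : Surjective π) (g : Z →ₗ[A] W)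
    (hg : ∀ z, π z = 0 → g z = 0) : ∃ k : C →ₗ[A] W, ∀ z, k (π z) = g z := by
  have hle : LinearMap.ker π ≤ LinearMap.ker g := fun z hz =>
    LinearMap.mem_ker.mpr (hg z (LinearMap.mem_ker.mp hz))
  let e := π.quotKerEquivOfSurjective surj
  refine ⟨Submodule.liftQ _ g hle ∘ₗ e.symm.toLinearMap, fun z => ?_⟩
  have he : e.symm (π z) = Submodule.Quotient.mk z := by
    rw [LinearEquiv.symm_apply_eq]; rfl
  show Submodule.liftQ _ g hle (e.symm (π z)) = g z
  rw [he, Submodule.liftQ_apply]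

/-- The gluing lemma: if `0 → N → Z → C → 0` is `(A,R)`-exact and stays exact under
`Hom_A(-,Q)`, then `DomdimGE n` for `N` and `C` implies it for `Z`. -/
lemma domdimGE_glue (n : ℕ) (N Z C : ModuleCat.{u} A)
    (ι : (N : Type u) →ₗ[A] Z) (π : (Z : Type u) →ₗ[A] C)
    (hπι : ∀ x, π (ι x) = 0) (hker : ∀ z, π z = 0 → ∃ x, ι x = z)
    (hρ : ∃ ρ : (Z : Type u) →+ N,
      (∀ (c : R) (x : Z), ρ (algebraMap R A c • x) = algebraMap R A c • ρ x) ∧ ∀ x, ρ (ι x) = x)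
    (hσ : ∃ σ : (C : Type u) →+ Z,
      (∀ (c : R) (x : C), σ (algebraMap R A c • x) = algebraMap R A c • σ x) ∧ ∀ c, π (σ c) = c)
    (hQext : ∀ g : (N : Type u) →ₗ[A] Q, ∃ h : (Z : Type u) →ₗ[A] Q, ∀ x, h (ι x) = g x)
    (hN : DomdimGE R A Q n N) (hC : DomdimGE R A Q n C) :
    DomdimGE R A Q n Z := by
  induction n generalizing N Z C with
  | zero => trivial
  | succ n IH =>
    obtain ⟨ρ, hρ1, hρ2⟩ := hρ
    obtain ⟨σ, hσ1, hσ2⟩ := hσ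
    obtain ⟨TN, hTN, fN, ⟨injN, rN, hrN1, hrN2⟩, extN, cokN⟩ := hN
    obtain ⟨TC, hTC, fC, ⟨injC, rC, hrC1, hrC2⟩, extC, cokC⟩ := hC
    have surjπ : Surjective π := fun c => ⟨σ c, hσ2 c⟩
    -- extend `fN` along `ι` to `F : Z → TN`
    obtain ⟨F, hF⟩ := ext_to_add hTN ι hQext fN
    -- the comparison map `Φ : Z → TN × TC`
    set Φ : (Z : Type u) →ₗ[A] (↑TN × ↑TC : Type u) :=
      LinearMap.prod F (fC ∘ₗ π) with hΦdef
    have hΦ : ∀ z, Φ z = (F z, fC (π z)) := fun z => rfl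
    -- injectivity of Φ
    have hinj : Injective Φ := by
      intro a b hab
      have h3 : π a = π b := injC (congrArg Prod.snd hab)
      have h4 : π (a - b) = 0 := by rw [map_sub, h3, sub_self]
      obtain ⟨x, hx⟩ := hker _ h4
      have hfst : F a = F b := congrArg Prod.fst hab
      have h6 : F (a - b) = 0 := by
        rw [map_sub, hfst, sub_self]
      rw [← hx, hF] at h6
      have hx0 : x = 0 := injN (h6.trans (map_zero fN).symm)
      have : a - b = 0 := by rw [← hx, hx0, map_zero]
      exact sub_eq_zero.mp this
    -- the R-linear retraction of Φ
    have hretr : ∃ r : ((↑TN × ↑TC : Type u)) →+ Z,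
        (∀ (c : R) (x : (↑TN × ↑TC : Type u)),
          r (algebraMap R A c • x) = algebraMap R A c • r x) ∧ ∀ z, r (Φ z) = z := by
      refine ⟨AddMonoidHom.mk' (fun tu => σ (rC tu.2) + ι (rN (tu.1 - F (σ (rC tu.2))))) ?_,
        ?_, ?_⟩
      · intro x y
        rw [Prod.snd_add, map_add rC, map_add σ]
        rw [show (x + y).1 - F (σ (rC x.2) + σ (rC y.2)) =
            (x.1 - F (σ (rC x.2))) + (y.1 - F (σ (rC y.2))) from by
          rw [map_add, Prod.fst_add]; abel]
        rw [map_add rN, map_add ι]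
        abel
      · intro c x
        have e1 : (algebraMap R A c • x).2 = algebraMap R A c • x.2 := rfl
        have e2 : (algebraMap R A c • x).1 = algebraMap R A c • x.1 := rfl
        show σ (rC (algebraMap R A c • x).2) + ι (rN ((algebraMap R A c • x).1 -
          F (σ (rC (algebraMap R A c • x).2)))) =
          algebraMap R A c • (σ (rC x.2) + ι (rN (x.1 - F (σ (rC x.2)))))
        rw [e1, e2, hrC1, hσ1, map_smul, ← smul_sub, hrN1, map_smul, smul_add]
      · intro z
        have hπz : π (z - σ (π z)) = 0 := by rw [map_sub, hσ2, sub_self]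
        obtain ⟨x, hx⟩ := hker _ hπz
        have e1 : rC (fC (π z)) = π z := hrC2 _
        have e2 : F z - F (σ (π z)) = fN x := by rw [← map_sub, ← hx, hF]
        show σ (rC (fC (π z))) + ι (rN (F z - F (σ (rC (fC (π z)))))) = z
        rw [e1, e2, hrN2, hx]; abel
    -- the Hom(-,Q) extension property of Φ
    have hhom : ∀ g : (Z : Type u) →ₗ[A] Q,
        ∃ h : ((↑TN × ↑TC : Type u)) →ₗ[A] Q, ∀ z, h (Φ z) = g z := by
      intro g
      obtain ⟨hN', hhN⟩ := extN (g ∘ₗ ι)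
      set g' : (Z : Type u) →ₗ[A] Q := g - hN' ∘ₗ F with hg'def
      have hg' : ∀ z, g' z = g z - hN' (F z) := fun z => rfl
      have hvanish : ∀ z, π z = 0 → g' z = 0 := by
        intro z hz
        obtain ⟨x, rfl⟩ := hker z hz
        have h5 : hN' (fN x) = g (ι x) := hhN x
        rw [hg', hF, h5, sub_self]
      obtain ⟨k, hk⟩ := factor_surj π surjπ g' hvanish
      obtain ⟨hC', hhC⟩ := extC k
      refine ⟨hN' ∘ₗ LinearMap.fst A _ _ + hC' ∘ₗ LinearMap.snd A _ _, fun z => ?_⟩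
      have : hN' (F z) + hC' (fC (π z)) = g z := by
        rw [hhC, hk, hg']; abel
      simpa [hΦ] using this
    -- the cokernel of Φ
    have hcok : DomdimGE R A Q n
        (ModuleCat.of A (((↑TN × ↑TC : Type u)) ⧸ LinearMap.range Φ)) := by
      set W := ((↑TN × ↑TC : Type u)) ⧸ LinearMap.range Φ with hWdef
      have hranφ : ∀ x : (N : Type u), Φ (ι x) = ((fN x, 0) : (↑TN × ↑TC : Type u)) := by
        intro x
        rw [hΦ, hF, hπι, map_zero]
      -- ι₁ : TN ⧸ ran fN → W
      have hι₁le : LinearMap.range fN ≤ LinearMap.ker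
          ((LinearMap.range Φ).mkQ ∘ₗ LinearMap.inl A (TN : Type u) (TC : Type u)) := by
        rintro t ⟨x, rfl⟩
        rw [LinearMap.mem_ker, LinearMap.comp_apply, LinearMap.inl_apply, Submodule.mkQ_apply,
          Submodule.Quotient.mk_eq_zero]
        exact ⟨ι x, (hranφ x)⟩
      set ι₁ : ((TN : Type u) ⧸ LinearMap.range fN) →ₗ[A] W :=
        Submodule.liftQ _ _ hι₁le with hι₁def
      have hι₁ : ∀ t : (TN : Type u), ι₁ (Submodule.Quotient.mk t) =
          Submodule.Quotient.mk ((t, 0) : (↑TN × ↑TC : Type u)) := fun t => rfl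
      -- π₁ : W → TC ⧸ ran fC
      have hπ₁le : LinearMap.range Φ ≤ LinearMap.ker
          ((LinearMap.range fC).mkQ ∘ₗ LinearMap.snd A (TN : Type u) (TC : Type u)) := by
        rintro v ⟨z, rfl⟩
        rw [LinearMap.mem_ker, LinearMap.comp_apply, LinearMap.snd_apply, Submodule.mkQ_apply,
          Submodule.Quotient.mk_eq_zero, hΦ]
        exact ⟨π z, rfl⟩
      set π₁ : W →ₗ[A] ((TC : Type u) ⧸ LinearMap.range fC) :=
        Submodule.liftQ _ _ hπ₁le with hπ₁def
      have hπ₁ : ∀ v : (↑TN × ↑TC : Type u), π₁ (Submodule.Quotient.mk v) =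
          Submodule.Quotient.mk v.2 := fun v => rfl
      -- π₁ ∘ ι₁ = 0
      have hπι₁ : ∀ x : (TN : Type u) ⧸ LinearMap.range fN, π₁ (ι₁ x) = 0 := by
        intro x
        obtain ⟨t, rfl⟩ := Submodule.Quotient.mk_surjective _ x
        rw [hι₁, hπ₁]
        exact (Submodule.Quotient.mk_eq_zero _).mpr (Submodule.zero_mem _)
      -- exactness at W
      have hker₁ : ∀ w : W, π₁ w = 0 → ∃ x, ι₁ x = w := by
        intro w hw
        obtain ⟨v, rfl⟩ := Submodule.Quotient.mk_surjective _ w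
        rw [hπ₁, Submodule.Quotient.mk_eq_zero] at hw
        obtain ⟨c, hc⟩ := hw
        obtain ⟨z, rfl⟩ := surjπ c
        refine ⟨Submodule.Quotient.mk (v.1 - F z), ?_⟩
        rw [hι₁, ← sub_eq_zero, ← Submodule.Quotient.mk_sub, Submodule.Quotient.mk_eq_zero]
        refine ⟨-z, ?_⟩
        rw [map_neg, hΦ, hc]
        have he : ((v.1 - F z, 0) : (↑TN × ↑TC : Type u)) - v = (-F z, -v.2) := by
          refine Prod.ext ?_ ?_
          · show v.1 - F z - v.1 = -F z; abel
          · show 0 - v.2 = -v.2; abel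
        rw [he]
        rfl
      -- the R-linear retraction of ι₁
      have hρ₁ : ∃ r : W →+ ((TN : Type u) ⧸ LinearMap.range fN),
          (∀ (c : R) (x : W), r (algebraMap R A c • x) = algebraMap R A c • r x) ∧
          ∀ x, r (ι₁ x) = x := by
        have hadd : ∀ x y : (↑TN × ↑TC : Type u),
            (Submodule.Quotient.mk ((x + y).1 - F (σ (rC (x + y).2))) :
              (TN : Type u) ⧸ LinearMap.range fN) =
            Submodule.Quotient.mk (x.1 - F (σ (rC x.2))) +
              Submodule.Quotient.mk (y.1 - F (σ (rC y.2))) := by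
          intro x y
          rw [← Submodule.Quotient.mk_add]
          congr 1
          rw [Prod.snd_add, map_add rC, map_add σ, map_add F, Prod.fst_add]
          abel
        set φ : (↑TN × ↑TC : Type u) →+ ((TN : Type u) ⧸ LinearMap.range fN) :=
          AddMonoidHom.mk' (fun v => Submodule.Quotient.mk (v.1 - F (σ (rC v.2))))
            (fun x y => hadd x y) with hφdef
        have hφ : ∀ v : (↑TN × ↑TC : Type u),
            φ v = Submodule.Quotient.mk (v.1 - F (σ (rC v.2))) := fun v => rfl
        have hkill : ∀ v ∈ LinearMap.range Φ, φ v = 0 := by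
          rintro v ⟨z, rfl⟩
          have hπz : π (z - σ (π z)) = 0 := by rw [map_sub, hσ2, sub_self]
          obtain ⟨x, hx⟩ := hker _ hπz
          rw [hφ, Submodule.Quotient.mk_eq_zero, hΦ]
          show F z - F (σ (rC (fC (π z)))) ∈ _
          rw [hrC2, ← map_sub, ← hx, hF]
          exact ⟨x, rfl⟩
        refine ⟨addQuotLift _ φ hkill, ?_, ?_⟩
        · intro c w
          obtain ⟨v, rfl⟩ := Submodule.Quotient.mk_surjective _ w
          rw [← Submodule.Quotient.mk_smul, addQuotLift_mk, addQuotLift_mk, hφ, hφ]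
          have e1 : (algebraMap R A c • v).2 = algebraMap R A c • v.2 := rfl
          have e2 : (algebraMap R A c • v).1 = algebraMap R A c • v.1 := rfl
          rw [e1, e2, hrC1, hσ1, map_smul, ← smul_sub, Submodule.Quotient.mk_smul]
        · intro x
          obtain ⟨t, rfl⟩ := Submodule.Quotient.mk_surjective _ x
          rw [hι₁, addQuotLift_mk, hφ]
          show (Submodule.Quotient.mk (t - F (σ (rC 0)))
            : (TN : Type u) ⧸ LinearMap.range fN) = Submodule.Quotient.mk t
          rw [map_zero rC, map_zero σ, map_zero F, sub_zero]
      -- the R-linear section of π₁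
      have hσ₁ : ∃ s : ((TC : Type u) ⧸ LinearMap.range fC) →+ W,
          (∀ (c : R) (x : (TC : Type u) ⧸ LinearMap.range fC),
            s (algebraMap R A c • x) = algebraMap R A c • s x) ∧
          ∀ x, π₁ (s x) = x := by
        have hadd : ∀ x y : (TC : Type u),
            (Submodule.Quotient.mk ((F (σ (rC (x + y))), x + y) : (↑TN × ↑TC : Type u)) : W) =
            Submodule.Quotient.mk ((F (σ (rC x)), x) : (↑TN × ↑TC : Type u)) +
              Submodule.Quotient.mk ((F (σ (rC y)), y) : (↑TN × ↑TC : Type u)) := by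
          intro x y
          rw [← Submodule.Quotient.mk_add]
          congr 1
          rw [map_add rC, map_add σ, map_add F]
          rfl
        set ψ : (TC : Type u) →+ W :=
          AddMonoidHom.mk' (fun u => Submodule.Quotient.mk
            ((F (σ (rC u)), u) : (↑TN × ↑TC : Type u))) (fun x y => hadd x y) with hψdef
        have hψ : ∀ u : (TC : Type u), ψ u = Submodule.Quotient.mk
            ((F (σ (rC u)), u) : (↑TN × ↑TC : Type u)) := fun u => rfl
        have hψkill : ∀ u ∈ LinearMap.range fC, ψ u = 0 := by
          rintro u ⟨c, rfl⟩
          rw [hψ, Submodule.Quotient.mk_eq_zero, hrC2]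
          refine ⟨σ c, ?_⟩
          rw [hΦ, hσ2]
        refine ⟨addQuotLift _ ψ hψkill, ?_, ?_⟩
        · intro c w
          obtain ⟨u, rfl⟩ := Submodule.Quotient.mk_surjective _ w
          rw [← Submodule.Quotient.mk_smul, addQuotLift_mk, addQuotLift_mk, hψ, hψ,
            hrC1, hσ1, map_smul, ← Submodule.Quotient.mk_smul]
          rfl
        · intro x
          obtain ⟨u, rfl⟩ := Submodule.Quotient.mk_surjective _ x
          rw [addQuotLift_mk, hψ, hπ₁]
      -- Hom(-,Q) extension through ι₁
      have hext₁ : ∀ g : ((TN : Type u) ⧸ LinearMap.range fN) →ₗ[A] Q,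
          ∃ h : W →ₗ[A] Q, ∀ x, h (ι₁ x) = g x := by
        intro g
        set gT : (TN : Type u) →ₗ[A] Q := g ∘ₗ (LinearMap.range fN).mkQ with hgTdef
        have hgT : ∀ t, gT t = g (Submodule.Quotient.mk t) := fun t => rfl
        have hvan : ∀ z, π z = 0 → (gT ∘ₗ F) z = 0 := by
          intro z hz
          obtain ⟨x, rfl⟩ := hker z hz
          show gT (F (ι x)) = 0
          rw [hF, hgT]
          have hz0 : (Submodule.Quotient.mk (fN x) : (TN : Type u) ⧸ LinearMap.range fN) = 0 :=
            (Submodule.Quotient.mk_eq_zero _).mpr ⟨x, rfl⟩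
          rw [hz0, map_zero]
        obtain ⟨k, hk⟩ := factor_surj π surjπ (gT ∘ₗ F) hvan
        obtain ⟨hC', hhC⟩ := extC k
        have hHle : LinearMap.range Φ ≤ LinearMap.ker
            (gT ∘ₗ LinearMap.fst A (TN : Type u) (TC : Type u) -
             hC' ∘ₗ LinearMap.snd A (TN : Type u) (TC : Type u)) := by
          rintro v ⟨z, rfl⟩
          rw [LinearMap.mem_ker, LinearMap.sub_apply, LinearMap.comp_apply, LinearMap.comp_apply,
            hΦ]
          show gT (F z) - hC' (fC (π z)) = 0
          have hk' : k (π z) = gT (F z) := hk z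
          rw [hhC, hk', sub_self]
        refine ⟨Submodule.liftQ _ _ hHle, fun x => ?_⟩
        obtain ⟨t, rfl⟩ := Submodule.Quotient.mk_surjective _ x
        rw [hι₁, Submodule.liftQ_apply]
        show gT t - hC' 0 = g (Submodule.Quotient.mk t)
        rw [map_zero, sub_zero, hgT]
      exact IH (ModuleCat.of A ((TN : Type u) ⧸ LinearMap.range fN)) (ModuleCat.of A W)
        (ModuleCat.of A ((TC : Type u) ⧸ LinearMap.range fC)) ι₁ π₁ hπι₁ hker₁ hρ₁ hσ₁ hext₁
        cokN cokC
    exact ⟨ModuleCat.of A ((↑TN × ↑TC : Type u)), inAdd_prod hTN hTC, Φ,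
      ⟨hinj, hretr.choose, hretr.choose_spec.1, hretr.choose_spec.2⟩, hhom, hcok⟩

end Glue
section Summand

variable {R : Type u} [CommRing R] {A : Type u} [Ring A] [Algebra R A]
variable {Q : Type u} [AddCommGroup Q] [Module A Q]

/-- `DomdimGE` passes to `A`-linear direct summands. -/
lemma domdimGE_summand (n : ℕ) (M X : ModuleCat.{u} A) (i : (M : Type u) →ₗ[A] X)
    (p : (X : Type u) →ₗ[A] M) (hpi : ∀ m, p (i m) = m) (hX : DomdimGE R A Q n X) :
    DomdimGE R A Q n M := by
  induction n generalizing M X with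
  | zero => trivial
  | succ n IH =>
    have hXn : DomdimGE R A Q n X := domdimGE_of_succ n X hX
    obtain ⟨T, hT, f, ⟨hinj, r, hr1, hr2⟩, hext, hcok⟩ := hX
    have hiinj : Injective i := fun a b hab => by
      have := congrArg p hab; rwa [hpi, hpi] at this
    refine ⟨T, hT, f ∘ₗ i, ⟨hinj.comp hiinj, p.toAddMonoidHom.comp r, ?_, ?_⟩, ?_, ?_⟩
    · intro c x
      show p (r (algebraMap R A c • x)) = algebraMap R A c • p (r x)
      rw [hr1, map_smul]
    · intro m
      show p (r (f (i m))) = m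
      rw [hr2, hpi]
    · intro g
      obtain ⟨h, hh⟩ := hext (g ∘ₗ p)
      exact ⟨h, fun m => (hh (i m)).trans (congrArg g (hpi m))⟩
    -- the cokernel
    set K := LinearMap.ker p with hKdef
    -- the projector X → K
    have hmem : ∀ x : (X : Type u), x - i (p x) ∈ K := by
      intro x
      rw [hKdef, LinearMap.mem_ker, map_sub, hpi, sub_self]
    set pK : (X : Type u) →ₗ[A] K :=
      LinearMap.codRestrict K (LinearMap.id - i ∘ₗ p) hmem with hpKdef
    have hpK : ∀ x : (X : Type u), (pK x : (X : Type u)) = x - i (p x) := fun x => rfl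
    have hpKiK : ∀ k : K, pK (K.subtype k) = k := by
      intro k
      apply Subtype.ext
      rw [hpK, Submodule.coe_subtype]
      have : p (k : (X : Type u)) = 0 := k.2
      rw [this, map_zero, sub_zero]
    have hKn : DomdimGE R A Q n (ModuleCat.of A K) :=
      IH (ModuleCat.of A K) X K.subtype pK hpKiK hXn
    -- set up the gluing
    set ι₂ : (K : Type u) →ₗ[A] ((T : Type u) ⧸ LinearMap.range (f ∘ₗ i)) :=
      (LinearMap.range (f ∘ₗ i)).mkQ ∘ₗ f ∘ₗ K.subtype with hι₂def
    have hι₂ : ∀ k : K, ι₂ k = Submodule.Quotient.mk (f (k : (X : Type u))) := fun k => rfl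
    have hπ₂le : LinearMap.range (f ∘ₗ i) ≤ LinearMap.ker (LinearMap.range f).mkQ := by
      rintro t ⟨m, rfl⟩
      rw [LinearMap.mem_ker, Submodule.mkQ_apply, Submodule.Quotient.mk_eq_zero]
      exact ⟨i m, rfl⟩
    set π₂ : ((T : Type u) ⧸ LinearMap.range (f ∘ₗ i)) →ₗ[A]
        ((T : Type u) ⧸ LinearMap.range f) := Submodule.liftQ _ _ hπ₂le with hπ₂def
    have hπ₂ : ∀ t : (T : Type u), π₂ (Submodule.Quotient.mk t) = Submodule.Quotient.mk t :=
      fun t => rfl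
    have hπι₂ : ∀ k : K, π₂ (ι₂ k) = 0 := by
      intro k
      rw [hι₂, hπ₂, Submodule.Quotient.mk_eq_zero]
      exact ⟨(k : (X : Type u)), rfl⟩
    have hker₂ : ∀ w : (T : Type u) ⧸ LinearMap.range (f ∘ₗ i),
        π₂ w = 0 → ∃ k : K, ι₂ k = w := by
      intro w hw
      obtain ⟨t, rfl⟩ := Submodule.Quotient.mk_surjective _ w
      rw [hπ₂, Submodule.Quotient.mk_eq_zero] at hw
      obtain ⟨x, rfl⟩ := hw
      refine ⟨pK x, ?_⟩
      rw [hι₂, ← sub_eq_zero, ← Submodule.Quotient.mk_sub, Submodule.Quotient.mk_eq_zero]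
      refine ⟨-(p x), ?_⟩
      show f (i (-(p x))) = f ((pK x : (X : Type u))) - f x
      rw [hpK, map_neg, map_neg, map_sub]
      abel
    have hρ₂ : ∃ ρ : ((T : Type u) ⧸ LinearMap.range (f ∘ₗ i)) →+ K,
        (∀ (c : R) (x : (T : Type u) ⧸ LinearMap.range (f ∘ₗ i)),
          ρ (algebraMap R A c • x) = algebraMap R A c • ρ x) ∧ ∀ k : K, ρ (ι₂ k) = k := by
      have hadd : ∀ t₁ t₂ : (T : Type u),
          (⟨r (t₁ + t₂) - i (p (r (t₁ + t₂))), hmem _⟩ : K) =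
          (⟨r t₁ - i (p (r t₁)), hmem _⟩ : K) + (⟨r t₂ - i (p (r t₂)), hmem _⟩ : K) := by
        intro t₁ t₂
        apply Subtype.ext
        show r (t₁ + t₂) - i (p (r (t₁ + t₂))) = (r t₁ - i (p (r t₁))) + (r t₂ - i (p (r t₂)))
        rw [map_add r, map_add p, map_add i]
        abel
      set φ : (T : Type u) →+ K :=
        AddMonoidHom.mk' (fun t => (⟨r t - i (p (r t)), hmem _⟩ : K)) hadd with hφdef
      have hφ : ∀ t, ((φ t : K) : (X : Type u)) = r t - i (p (r t)) := fun t => rfl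
      have hkill : ∀ t ∈ LinearMap.range (f ∘ₗ i), φ t = 0 := by
        rintro t ⟨m, rfl⟩
        apply Subtype.ext
        show r (f (i m)) - i (p (r (f (i m)))) = 0
        rw [hr2, hpi, sub_self]
      refine ⟨addQuotLift _ φ hkill, ?_, ?_⟩
      · intro c w
        obtain ⟨t, rfl⟩ := Submodule.Quotient.mk_surjective _ w
        rw [← Submodule.Quotient.mk_smul, addQuotLift_mk, addQuotLift_mk]
        apply Subtype.ext
        show r (algebraMap R A c • t) - i (p (r (algebraMap R A c • t))) =
          algebraMap R A c • (r t - i (p (r t)))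
        rw [hr1, map_smul, map_smul, smul_sub]
      · intro k
        rw [hι₂, addQuotLift_mk]
        apply Subtype.ext
        show r (f ((k : (X : Type u)))) - i (p (r (f (k : (X : Type u))))) = (k : (X : Type u))
        rw [hr2]
        have : p (k : (X : Type u)) = 0 := k.2
        rw [this, map_zero, sub_zero]
    have hσ₂ : ∃ s : ((T : Type u) ⧸ LinearMap.range f) →+
        ((T : Type u) ⧸ LinearMap.range (f ∘ₗ i)),
        (∀ (c : R) (x : (T : Type u) ⧸ LinearMap.range f),
          s (algebraMap R A c • x) = algebraMap R A c • s x) ∧ ∀ w, π₂ (s w) = w := by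
      have hadd : ∀ t₁ t₂ : (T : Type u),
          (Submodule.Quotient.mk (t₁ + t₂ - f (r (t₁ + t₂)) + f (i (p (r (t₁ + t₂)))))
            : (T : Type u) ⧸ LinearMap.range (f ∘ₗ i)) =
          Submodule.Quotient.mk (t₁ - f (r t₁) + f (i (p (r t₁)))) +
            Submodule.Quotient.mk (t₂ - f (r t₂) + f (i (p (r t₂)))) := by
        intro t₁ t₂
        rw [← Submodule.Quotient.mk_add]
        congr 1
        rw [map_add r, map_add p, map_add i, map_add f, map_add f]
        abel
      set ψ : (T : Type u) →+ ((T : Type u) ⧸ LinearMap.range (f ∘ₗ i)) :=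
        AddMonoidHom.mk' (fun t => Submodule.Quotient.mk (t - f (r t) + f (i (p (r t))))) hadd
        with hψdef
      have hψ : ∀ t, ψ t = Submodule.Quotient.mk (t - f (r t) + f (i (p (r t)))) := fun t => rfl
      have hkill : ∀ t ∈ LinearMap.range f, ψ t = 0 := by
        rintro t ⟨x, rfl⟩
        rw [hψ, Submodule.Quotient.mk_eq_zero, hr2]
        refine ⟨p x, ?_⟩
        show f (i (p x)) = f x - f x + f (i (p x))
        rw [sub_self, zero_add]
      refine ⟨addQuotLift _ ψ hkill, ?_, ?_⟩
      · intro c w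
        obtain ⟨t, rfl⟩ := Submodule.Quotient.mk_surjective _ w
        rw [← Submodule.Quotient.mk_smul, addQuotLift_mk, addQuotLift_mk, hψ, hψ]
        rw [hr1, map_smul, map_smul, map_smul, map_smul, ← Submodule.Quotient.mk_smul]
        congr 1
        rw [smul_add, smul_sub]
      · intro w
        obtain ⟨t, rfl⟩ := Submodule.Quotient.mk_surjective _ w
        rw [addQuotLift_mk, hψ, hπ₂, ← sub_eq_zero, ← Submodule.Quotient.mk_sub,
          Submodule.Quotient.mk_eq_zero]
        refine ⟨i (p (r t)) - r t, ?_⟩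
        show f (i (p (r t)) - r t) = t - f (r t) + f (i (p (r t))) - t
        rw [map_sub]
        abel
    have hextK : ∀ g : (K : Type u) →ₗ[A] Q,
        ∃ h : ((T : Type u) ⧸ LinearMap.range (f ∘ₗ i)) →ₗ[A] Q, ∀ k : K, h (ι₂ k) = g k := by
      intro g
      obtain ⟨h, hh⟩ := hext (g ∘ₗ pK)
      have hkill : LinearMap.range (f ∘ₗ i) ≤ LinearMap.ker h := by
        rintro t ⟨m, rfl⟩
        rw [LinearMap.mem_ker]
        show h (f (i m)) = 0
        have h1 : h (f (i m)) = g (pK (i m)) := hh (i m)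
        have h2 : pK (i m) = 0 := by
          apply Subtype.ext
          rw [hpK, hpi, sub_self]; rfl
        rw [h1, h2, map_zero]
      refine ⟨Submodule.liftQ _ h hkill, fun k => ?_⟩
      rw [hι₂, Submodule.liftQ_apply]
      have h1 : h (f (k : (X : Type u))) = g (pK (k : (X : Type u))) := hh _
      have h2 : pK (k : (X : Type u)) = k := hpKiK k
      rw [h1, h2]
    exact domdimGE_glue n (ModuleCat.of A K)
      (ModuleCat.of A ((T : Type u) ⧸ LinearMap.range (f ∘ₗ i)))
      (ModuleCat.of A ((T : Type u) ⧸ LinearMap.range f)) ι₂ π₂ hπι₂ hker₂ hρ₂ hσ₂ hextK hKn hcok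

end Summand
section Pi

variable {R : Type u} [CommRing R] {A : Type u} [Ring A] [Algebra R A]
variable {Q : Type u} [AddCommGroup Q] [Module A Q]

/-- `DomdimGE` for a finite product, given it for each factor. -/
lemma domdimGE_pi {ι : Type u} [Fintype ι] (n : ℕ) (M : ι → ModuleCat.{u} A)
    (h : ∀ i, DomdimGE R A Q n (M i)) :
    DomdimGE R A Q n (ModuleCat.of A (∀ i, (M i : Type u))) := by
  classical
  induction n generalizing M with
  | zero => trivial
  | succ n IH =>
    choose T hT f hmono hext hcok using h
    choose hinj r hr1 hr2 using hmono
    set F : (∀ i, (M i : Type u)) →ₗ[A] ∀ i, (T i : Type u) :=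
      LinearMap.pi (fun i => f i ∘ₗ LinearMap.proj i) with hFdef
    have hF : ∀ (m) (i : ι), F m i = f i (m i) := fun m i => rfl
    have hFinj : Injective F := by
      intro a b hab
      funext i
      exact hinj i (congrFun hab i)
    refine ⟨ModuleCat.of A (∀ i, (T i : Type u)), inAdd_pi (fun i => hT i), F,
      ⟨hFinj, AddMonoidHom.mk' (fun t i => r i (t i))
        (fun x y => funext fun i => map_add _ _ _), ?_, ?_⟩, ?_, ?_⟩
    · intro c x
      funext i
      exact hr1 i c (x i)
    · intro m
      funext i
      exact hr2 i (m i)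
    · intro g
      choose hQ hhQ using fun i =>
        hext i (g ∘ₗ LinearMap.single A (fun j => (M j : Type u)) i)
      refine ⟨∑ i : ι, hQ i ∘ₗ LinearMap.proj i, fun m => ?_⟩
      have e1 : (∑ i : ι, hQ i ∘ₗ LinearMap.proj i) (F m) = ∑ i : ι, hQ i (f i (m i)) := by
        rw [LinearMap.sum_apply]
        exact Finset.sum_congr rfl fun i _ => rfl
      have e2 : ∀ i : ι, hQ i (f i (m i)) = g (Pi.single i (m i)) := fun i => hhQ i (m i)
      refine Eq.trans e1 ?_
      exact (Finset.sum_congr rfl fun i _ => e2 i).trans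
        ((map_sum g _ Finset.univ).symm.trans (congrArg g (Finset.univ_sum_single m)))
    · have hrange : LinearMap.range F =
          Submodule.pi Set.univ (fun i => LinearMap.range (f i)) := range_pi_map _
      have e : ((∀ i, (T i : Type u)) ⧸ LinearMap.range F) ≃ₗ[A]
          ∀ i, ((T i : Type u) ⧸ LinearMap.range (f i)) :=
        (Submodule.quotEquivOfEq _ _ hrange).trans (quotPiEquiv _)
      have hpi : DomdimGE R A Q n
          (ModuleCat.of A (∀ i, ((T i : Type u) ⧸ LinearMap.range (f i)))) :=
        IH (fun i => ModuleCat.of A ((T i : Type u) ⧸ LinearMap.range (f i))) (fun i => hcok i)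
      exact domdimGE_congr e.symm n hpi

/-- `DomdimGE` for a factor of a finite product. -/
lemma domdimGE_proj {ι : Type u} (n : ℕ) (M : ι → ModuleCat.{u} A) (i0 : ι)
    (h : DomdimGE R A Q n (ModuleCat.of A (∀ i, (M i : Type u)))) :
    DomdimGE R A Q n (M i0) := by
  classical
  exact domdimGE_summand n (M i0) (ModuleCat.of A (∀ i, (M i : Type u)))
    (LinearMap.single A (fun j => (M j : Type u)) i0) (LinearMap.proj i0)
    (fun m => Pi.single_eq_same (M := fun j => (M j : Type u)) i0 m) h

/-- `n ≤ Domdim` iff `DomdimGE n`. -/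
lemma le_domdim_iff (M : ModuleCat.{u} A) (n : ℕ) :
    (n : ℕ∞) ≤ Domdim R A Q M ↔ DomdimGE R A Q n M := by
  constructor
  · intro hle
    by_contra hn
    have hn0 : n ≠ 0 := by rintro rfl; exact hn trivial
    have hbound : ∀ k : ℕ, DomdimGE R A Q k M → (k : ℕ∞) ≤ ((n - 1 : ℕ) : ℕ∞) := by
      intro k hk
      have hkn : k < n := by
        by_contra hkn'
        push_neg at hkn'
        exact hn (domdimGE_mono hkn' M hk)
      exact_mod_cast Nat.le_sub_one_of_lt hkn
    have hsup : Domdim R A Q M ≤ ((n - 1 : ℕ) : ℕ∞) := by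
      rw [Domdim]
      exact iSup₂_le hbound
    have hfin := hle.trans hsup
    rw [Nat.cast_le] at hfin
    omega
  · intro h
    exact le_iSup_of_le n (le_iSup_of_le h le_rfl)

end Pi

section Stmt8

variable (R : Type u) [CommRing R] [IsNoetherianRing R]
variable (A : Type u) [Ring A] [Algebra R A] [Module.Finite R A] [Module.Projective R A]
variable (Q : Type u) [AddCommGroup Q] [Module R Q] [Module A Q]
  [IsScalarTower R A Q] [SMulCommClass A R Q] [SMulCommClass R A Q]
  [Module.Finite A Q] [Module.Projective R Q]

/-- For a finite family of finitely generated `A`-modules `Mᵢ`,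
projective over `R`, the relative dominant dimension of the direct sum is the
infimum of the relative dominant dimensions. -/
theorem stmt_8
    (hQQ : Module.Projective R (TensorOver R A (Q →ₗ[R] R) Q))
    (ι : Type u) [Fintype ι] (M : ι → Type u)
    [∀ i, AddCommGroup (M i)] [∀ i, Module R (M i)] [∀ i, Module A (M i)]
    [∀ i, IsScalarTower R A (M i)]
    [∀ i, Module.Finite A (M i)] [∀ i, Module.Projective R (M i)] :
    Domdim R A Q (ModuleCat.of A (∀ i, M i)) =
      ⨅ i, Domdim R A Q (ModuleCat.of A (M i)) := by
  classical
  apply le_antisymm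
  · have : (⨆ (n : ℕ) (_ : DomdimGE R A Q n (ModuleCat.of A (∀ i, M i))), (n : ℕ∞)) ≤
        ⨅ i, Domdim R A Q (ModuleCat.of A (M i)) := by
      refine iSup₂_le fun n hn => le_iInf fun i => ?_
      refine (le_domdim_iff _ n).mpr ?_
      exact domdimGE_proj n (fun j => ModuleCat.of A (M j)) i hn
    exact this
  · by_contra hlt
    push_neg at hlt
    have hne : Domdim R A Q (ModuleCat.of A (∀ i, M i)) ≠ ⊤ := by
      intro h
      rw [h] at hlt
      exact not_top_lt hlt
    set m : ℕ := (Domdim R A Q (ModuleCat.of A (∀ i, M i))).toNat with hmdef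
    have hm : ((m : ℕ) : ℕ∞) = Domdim R A Q (ModuleCat.of A (∀ i, M i)) :=
      ENat.coe_toNat hne
    have h1 : ((m + 1 : ℕ) : ℕ∞) ≤ ⨅ i, Domdim R A Q (ModuleCat.of A (M i)) := by
      rw [← hm] at hlt
      have h2 : (m : ℕ∞) + 1 ≤ ⨅ i, Domdim R A Q (ModuleCat.of A (M i)) :=
        Order.add_one_le_of_lt hlt
      exact_mod_cast h2
    have h2 : ∀ i, DomdimGE R A Q (m + 1) (ModuleCat.of A (M i)) := fun i =>
      (le_domdim_iff _ _).mp (h1.trans (iInf_le _ i))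
    have h3 : DomdimGE R A Q (m + 1) (ModuleCat.of A (∀ i, M i)) :=
      domdimGE_pi (m + 1) (fun i => ModuleCat.of A (M i)) h2
    have h4 : ((m + 1 : ℕ) : ℕ∞) ≤ Domdim R A Q (ModuleCat.of A (∀ i, M i)) :=
      (le_domdim_iff _ _).mpr h3
    rw [← hm] at h4
    have h5 : m + 1 ≤ m := by exact_mod_cast h4
    omega

end Stmt8
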